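/- Equality case of entropy decay: if φ : [0,∞) → ℝ is strictly convex with φ(0) = φ(1) = 0, then for a probability vector p ∈ Δ^N with ⟨u,p⟩ > 0 one has E(Mp) = E(p) if and only if there exist α, β, λ ≥ 0 with α + β + λ = 1 and p = α e_0 + λ v + β e_N, where e_0, e_N are the standard basis vectors at the absorbing states and v is the zero-extended quasi-stationary vector. -/

import Mathlib

open Finset Matrix Filter

/-- The (N+1)×(N+1) Moran transition matrix (indices 0,…,N) built from a
type selection vector `s`. -/
noncomputable def moranM (N : ℕ) (s : ℕ → ℝ) : Matrix (Fin (N + 1)) (Fin (N + 1)) ℝ :=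
  fun i j =>
    if (i : ℕ) + 1 = (j : ℕ) then ((j : ℕ) : ℝ) / N * (1 - s (j : ℕ))
    else if (i : ℕ) = (j : ℕ) + 1 then ((N : ℝ) - ((j : ℕ) : ℝ)) / N * s (j : ℕ)
    else if (i : ℕ) = (j : ℕ) then
      1 - ((j : ℕ) : ℝ) / N * (1 - s (j : ℕ)) - ((N : ℝ) - ((j : ℕ) : ℝ)) / N * s (j : ℕ)
    else 0

/-- `s` is a type selection vector: `s 0 = 0`, `s N = 1`, `0 < s i < 1` in the interior. -/
def IsTypeSelection (N : ℕ) (s : ℕ → ℝ) : Prop :=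
  s 0 = 0 ∧ s N = 1 ∧ ∀ i : ℕ, 0 < i → i < N → 0 < s i ∧ s i < 1

/-- The core matrix: the (N−1)×(N−1) submatrix of the Moran matrix on states 1,…,N−1. -/
noncomputable def moranCore (N : ℕ) (s : ℕ → ℝ) : Matrix (Fin (N - 1)) (Fin (N - 1)) ℝ :=
  fun i j =>
    moranM N s ⟨(i : ℕ) + 1, by have := i.isLt; omega⟩ ⟨(j : ℕ) + 1, by have := j.isLt; omega⟩

/-- Embedding of core indices {1,…,N−1} into the full index set {0,…,N}. -/
def embIn (N : ℕ) (i : Fin (N - 1)) : Fin (N + 1) :=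
  ⟨(i : ℕ) + 1, by have := i.isLt; omega⟩

/-- equality case of entropy decay: for strictly convex φ with
φ(0) = φ(1) = 0, E(Mp) = E(p) iff p is a convex combination of e₀, the
zero-extended quasi-stationary vector v, and e_N. -/
/- sum splitting -/
lemma moran_sum_split {N : ℕ} (hN : 2 ≤ N) (f : Fin (N+1) → ℝ) :
    ∑ j, f j = f ⟨0, Nat.succ_pos N⟩ + (∑ k : Fin (N-1), f (embIn N k)) + f (Fin.last N) := by
  obtain ⟨m, rfl⟩ : ∃ m, N = m + 2 := ⟨N - 2, by omega⟩
  show _ = f ⟨0, by omega⟩ + (∑ k : Fin (m+1), f (embIn (m+2) k)) + f (Fin.last (m+2))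
  rw [Fin.sum_univ_succ, Fin.sum_univ_castSucc]
  have h1 : f (0 : Fin (m+3)) = f ⟨0, by omega⟩ := rfl
  have h2 : ∀ k : Fin (m+1), (Fin.succ (Fin.castSucc k)) = embIn (m+2) k := by
    intro k; apply Fin.ext; simp [embIn]
  have h3 : Fin.succ (Fin.last (m+1)) = Fin.last (m+2) := by
    apply Fin.ext; simp
  rw [h3]
  have h4 : ∑ k : Fin (m+1), f (Fin.succ (Fin.castSucc k)) = ∑ k : Fin (m+1), f (embIn (m+2) k) := by
    apply Finset.sum_congr rfl; intro k _; rw [h2]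
  rw [h4, h1]; ring

section entries
variable {N : ℕ} {s : ℕ → ℝ} (hN : 2 ≤ N) (hs : IsTypeSelection N s)

lemma s_interior (hs : IsTypeSelection N s) (j : Fin (N-1)) :
    0 < s ((j:ℕ)+1) ∧ s ((j:ℕ)+1) < 1 :=
  hs.2.2 _ (by omega) (by have := j.isLt; omega)

include hN hs in
lemma core_diag_pos (i : Fin (N-1)) : 0 < moranCore N s i i := by
  have hsi := s_interior hs i
  have hiN : (i:ℕ) + 1 < N := by have := i.isLt; omega
  have hNR : (0:ℝ) < N := by positivity
  have hc : ((i:ℕ):ℝ) + 1 ≤ (N:ℝ) - 1 := by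
    have : ((i:ℕ):ℝ) + 1 + 1 ≤ (N:ℝ) := by exact_mod_cast hiN
    linarith
  simp only [moranCore, moranM]
  rw [if_neg (by omega), if_neg (by omega)]
  rw [if_true]
  push_cast
  have key : 1 - (((i:ℕ):ℝ)+1) / N * (1 - s ((i:ℕ)+1)) - ((N:ℝ) - (((i:ℕ):ℝ)+1)) / N * s ((i:ℕ)+1)
      = (((N:ℝ) - (((i:ℕ):ℝ)+1)) * (1 - s ((i:ℕ)+1)) + (((i:ℕ):ℝ)+1) * s ((i:ℕ)+1)) / N := by
    field_simp; ring
  rw [key]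
  apply div_pos _ hNR
  have h1 : (0:ℝ) < (N:ℝ) - (((i:ℕ):ℝ)+1) := by linarith
  nlinarith [hsi.1, hsi.2]

include hN hs in
lemma core_sub_pos (i j : Fin (N-1)) (hij : (i:ℕ) = (j:ℕ)+1) : 0 < moranCore N s i j := by
  have hsj := s_interior hs j
  have hjN : (j:ℕ) + 1 < N := by have := j.isLt; omega
  have hNR : (0:ℝ) < N := by positivity
  simp only [moranCore, moranM]
  rw [if_neg (by omega), if_pos (by omega)]
  have h1 : (0:ℝ) < (N:ℝ) - (((j:ℕ):ℝ)+1) := by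
    have : ((j:ℕ):ℝ) + 1 + 1 ≤ (N:ℝ) := by exact_mod_cast hjN
    linarith
  push_cast
  apply mul_pos (div_pos h1 hNR) hsj.1

include hN hs in
lemma core_nonneg (i j : Fin (N-1)) : 0 ≤ moranCore N s i j := by
  have hsj := s_interior hs j
  have hjN : (j:ℕ) + 1 < N := by have := j.isLt; omega
  have hNR : (0:ℝ) < N := by positivity
  have h1 : (0:ℝ) ≤ (N:ℝ) - (((j:ℕ):ℝ)+1) := by
    have : ((j:ℕ):ℝ) + 1 + 1 ≤ (N:ℝ) := by exact_mod_cast hjN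
    linarith
  rcases Nat.lt_trichotomy (i:ℕ) (j:ℕ) with h | h | h
  · rcases eq_or_lt_of_le (Nat.succ_le_of_lt h) with he | hlt
    · -- superdiagonal
      simp only [moranCore, moranM]
      rw [if_pos (by omega)]
      push_cast
      have h2 : (0:ℝ) ≤ ((j:ℕ):ℝ) + 1 := by positivity
      exact mul_nonneg (div_nonneg h2 hNR.le) (by linarith [hsj.2])
    · simp only [moranCore, moranM]
      rw [if_neg (by omega), if_neg (by omega), if_neg (by omega)]
  · have : i = j := Fin.ext h
    subst this
    exact le_of_lt (core_diag_pos hN hs i)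
  · rcases eq_or_lt_of_le (Nat.succ_le_of_lt h) with he | hlt
    · exact le_of_lt (core_sub_pos hN hs i j (by omega))
    · simp only [moranCore, moranM]
      rw [if_neg (by omega), if_neg (by omega), if_neg (by omega)]

end entries

theorem moran_entropy_decay_equality
    (N : ℕ) (hN : 2 ≤ N) (s : ℕ → ℝ) (hs : IsTypeSelection N s)
    (μ1 : ℝ) (u v : Fin (N - 1) → ℝ)
    (hu : ∀ i, 0 < u i) (hv : ∀ i, 0 < v i)
    (huM : (moranCore N s).vecMul u = μ1 • u)
    (hMv : (moranCore N s).mulVec v = μ1 • v)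
    (hvsum : ∑ i, v i = 1) (huv : ∑ i, u i * v i = 1)
    (vext : Fin (N + 1) → ℝ)
    (hvx0 : vext ⟨0, by omega⟩ = 0) (hvxN : vext (Fin.last N) = 0)
    (hvxi : ∀ i : Fin (N - 1), vext (embIn N i) = v i)
    (φ : ℝ → ℝ) (hφ : StrictConvexOn ℝ (Set.Ici 0) φ) (hφ0 : φ 0 = 0) (hφ1 : φ 1 = 0)
    (p : Fin (N + 1) → ℝ) (hp : ∀ i, 0 ≤ p i) (hpsum : ∑ i, p i = 1)
    (hip : 0 < ∑ i : Fin (N - 1), u i * p (embIn N i))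
    (E : (Fin (N + 1) → ℝ) → ℝ)
    (hE : ∀ q : Fin (N + 1) → ℝ, E q = ∑ i : Fin (N - 1),
      φ (q (embIn N i) / (v i * ∑ j : Fin (N - 1), u j * q (embIn N j))) * v i * u i) :
    E ((moranM N s).mulVec p) = E p ↔
      ∃ α β lam : ℝ, 0 ≤ α ∧ 0 ≤ β ∧ 0 ≤ lam ∧ α + β + lam = 1 ∧
        p = α • (Pi.single (⟨0, by omega⟩ : Fin (N + 1)) 1 : Fin (N + 1) → ℝ)
            + lam • vext
            + β • (Pi.single (Fin.last N) 1 : Fin (N + 1) → ℝ) := by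
  set A := moranCore N s with hA
  set M := moranM N s with hM
  -- basic positivity
  have hμ : 0 < μ1 := by
    have i0 : Fin (N-1) := ⟨0, by omega⟩
    have h1 : A.mulVec v i0 = μ1 * v i0 := by rw [hMv]; rfl
    have h2 : A i0 i0 * v i0 ≤ ∑ j, A i0 j * v j :=
      Finset.single_le_sum (f := fun j => A i0 j * v j)
        (fun j _ => mul_nonneg (core_nonneg hN hs i0 j) (hv j).le) (mem_univ i0)
    have h3 : 0 < A i0 i0 * v i0 := mul_pos (core_diag_pos hN hs i0) (hv i0)
    have h4 : A.mulVec v i0 = ∑ j, A i0 j * v j := rfl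
    have : 0 < μ1 * v i0 := by rw [← h1, h4]; linarith
    nlinarith [hv i0]
  -- column 0 and column N of M vanish on core rows
  have hMcol0 : ∀ i : Fin (N-1), M (embIn N i) ⟨0, by omega⟩ = 0 := by
    intro i
    simp only [hM, moranM, embIn]
    rcases eq_or_ne ((i:ℕ)+1) 1 with h | h
    · rw [if_neg (by omega), if_pos (by omega)]
      simp [hs.1]
    · rw [if_neg (by omega), if_neg (by omega), if_neg (by omega)]
  have hMcolN : ∀ i : Fin (N-1), M (embIn N i) (Fin.last N) = 0 := by
    intro i
    have hi : (i:ℕ) + 1 < N := by have := i.isLt; omega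
    simp only [hM, moranM, embIn, Fin.val_last]
    rcases eq_or_ne ((i:ℕ)+1+1) N with h | h
    · rw [if_pos (by omega)]
      simp [hs.2.1]
    · rw [if_neg (by omega), if_neg (by omega), if_neg (by omega)]
  have hMemb : ∀ i k : Fin (N-1), M (embIn N i) (embIn N k) = A i k := fun i k => rfl
  set S := ∑ j : Fin (N-1), u j * p (embIn N j) with hSdef
  have hS : 0 < S := hip
  set q := M.mulVec p with hq
  have hqcore : ∀ i : Fin (N-1), q (embIn N i) = ∑ j, A i j * p (embIn N j) := by
    intro i
    have : q (embIn N i) = ∑ j : Fin (N+1), M (embIn N i) j * p j := rfl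
    rw [this, moran_sum_split hN]
    rw [hMcol0 i, hMcolN i]
    simp only [hMemb, zero_mul, add_zero, zero_add]
  have hcol : ∀ j, ∑ i, u i * A i j = μ1 * u j := by
    intro j
    have h := congrFun huM j
    simpa [Matrix.vecMul, dotProduct, Pi.smul_apply, smul_eq_mul] using h
  have hrowA : ∀ i, ∑ j, A i j * v j = μ1 * v i := by
    intro i
    have h := congrFun hMv i
    simpa [Matrix.mulVec, dotProduct, Pi.smul_apply, smul_eq_mul] using h
  have huq : ∑ j, u j * q (embIn N j) = μ1 * S := by
    calc ∑ j, u j * q (embIn N j) = ∑ i, ∑ j, u i * (A i j * p (embIn N j)) := by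
          simp only [hqcore, Finset.mul_sum]
      _ = ∑ j, ∑ i, u i * (A i j * p (embIn N j)) := Finset.sum_comm
      _ = ∑ j, (∑ i, u i * A i j) * p (embIn N j) := by
          refine Finset.sum_congr rfl fun j _ => ?_
          rw [Finset.sum_mul]
          exact Finset.sum_congr rfl fun i _ => by ring
      _ = ∑ j, μ1 * (u j * p (embIn N j)) := by
          refine Finset.sum_congr rfl fun j _ => ?_
          rw [hcol]; ring
      _ = μ1 * S := by rw [hSdef, Finset.mul_sum]
  obtain ⟨w, hwdef⟩ : ∃ w : Fin (N-1) → ℝ, w = fun j => p (embIn N j) / (v j * S) :=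
    ⟨_, rfl⟩
  have hw0 : ∀ j, 0 ≤ w j := fun j => hwdef ▸ div_nonneg (hp _) (mul_nonneg (hv j).le hS.le)
  have hpw : ∀ j, p (embIn N j) = w j * (v j * S) := by
    intro j
    have hvS : v j * S ≠ 0 := (mul_pos (hv j) hS).ne'
    simp only [hwdef]
    field_simp
    rw [mul_div_assoc, div_self (hv j).ne', mul_one]
  obtain ⟨P, hPdef⟩ : ∃ P : Fin (N-1) → Fin (N-1) → ℝ,
      P = fun i j => A i j * v j / (μ1 * v i) := ⟨_, rfl⟩
  have hPnn : ∀ i j, 0 ≤ P i j := fun i j => hPdef ▸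
    div_nonneg (mul_nonneg (core_nonneg hN hs i j) (hv j).le) (mul_nonneg hμ.le (hv i).le)
  have hP1 : ∀ i, ∑ j, P i j = 1 := by
    intro i
    simp only [hPdef]
    rw [← Finset.sum_div, hrowA]
    exact div_self (mul_pos hμ (hv i)).ne' 
  have hPdiag : ∀ i, P i i ≠ 0 := fun i => hPdef ▸
    (div_pos (mul_pos (core_diag_pos hN hs i) (hv i)) (mul_pos hμ (hv i))).ne'
  have hPsub : ∀ i j : Fin (N-1), (i:ℕ) = (j:ℕ)+1 → P i j ≠ 0 := fun i j h => hPdef ▸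
    (div_pos (mul_pos (core_sub_pos hN hs i j h) (hv j)) (mul_pos hμ (hv i))).ne'
  have hmix : ∀ i, q (embIn N i) / (v i * (μ1 * S)) = ∑ j, P i j * w j := by
    intro i
    have hterm : ∀ j, P i j * w j = (A i j * p (embIn N j)) / (μ1 * v i * S) := by
      intro j
      simp only [hPdef, hwdef]
      have h1 : v j ≠ 0 := (hv j).ne'
      have h2 : v i ≠ 0 := (hv i).ne'
      have h3 : μ1 ≠ 0 := hμ.ne'
      have h4 : S ≠ 0 := hS.ne'
      field_simp
    calc q (embIn N i) / (v i * (μ1 * S))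
        = (∑ j, A i j * p (embIn N j)) / (μ1 * v i * S) := by
          rw [hqcore i]; ring_nf
      _ = ∑ j, A i j * p (embIn N j) / (μ1 * v i * S) := Finset.sum_div _ _ _
      _ = ∑ j, P i j * w j := Finset.sum_congr rfl fun j _ => (hterm j).symm
  have hEp : E p = ∑ i, φ (w i) * v i * u i := by
    rw [hE p, ← hSdef]
    simp only [hwdef]
  have hEq2 : E q = ∑ i, φ (∑ j, P i j * w j) * v i * u i := by
    rw [hE q, huq]
    exact Finset.sum_congr rfl fun i _ => by rw [hmix i]
  have hjen : ∀ i, φ (∑ j, P i j * w j) ≤ ∑ j, P i j * φ (w j) := by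
    intro i
    have h := hφ.convexOn.map_sum_le (t := univ) (w := P i) (p := w) (f := φ)
      (fun j _ => hPnn i j) (hP1 i) (fun j _ => hw0 j)
    simpa [smul_eq_mul] using h
  have hsum_ub : ∑ i, (∑ j, P i j * φ (w j)) * v i * u i = ∑ i, φ (w i) * v i * u i := by
    have h3 : μ1 ≠ 0 := hμ.ne'
    calc ∑ i, (∑ j, P i j * φ (w j)) * v i * u i
        = ∑ i, ∑ j, u i * A i j * (v j * φ (w j)) / μ1 := by
          refine Finset.sum_congr rfl fun i _ => ?_
          rw [Finset.sum_mul, Finset.sum_mul]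
          refine Finset.sum_congr rfl fun j _ => ?_
          simp only [hPdef]
          have h2 : v i ≠ 0 := (hv i).ne'
          field_simp
      _ = ∑ j, ∑ i, u i * A i j * (v j * φ (w j)) / μ1 := Finset.sum_comm
      _ = ∑ j, (∑ i, u i * A i j) * (v j * φ (w j)) / μ1 := by
          refine Finset.sum_congr rfl fun j _ => ?_
          rw [Finset.sum_mul, Finset.sum_div]
      _ = ∑ j, φ (w j) * v j * u j := by
          refine Finset.sum_congr rfl fun j _ => ?_
          rw [hcol]
          field_simp
  constructor
  · -- forward direction
    intro hEqE
    have key : ∑ i, φ (∑ j, P i j * w j) * v i * u i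
        = ∑ i, (∑ j, P i j * φ (w j)) * v i * u i := by
      rw [← hEq2, hEqE, hEp, ← hsum_ub]
    have hterm0 : ∀ i, ∑ j, P i j * φ (w j) = φ (∑ j, P i j * w j) := by
      have hsz : ∑ i, ((∑ j, P i j * φ (w j)) - φ (∑ j, P i j * w j)) * (v i * u i) = 0 := by
        have hrw : ∑ i, ((∑ j, P i j * φ (w j)) - φ (∑ j, P i j * w j)) * (v i * u i)
            = ∑ i, (∑ j, P i j * φ (w j)) * v i * u i
              - ∑ i, φ (∑ j, P i j * w j) * v i * u i := by
          rw [← Finset.sum_sub_distrib]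
          exact Finset.sum_congr rfl fun i _ => by ring
        rw [hrw, ← key, sub_self]
      intro i
      have hnn : ∀ i ∈ (univ : Finset (Fin (N-1))),
          0 ≤ ((∑ j, P i j * φ (w j)) - φ (∑ j, P i j * w j)) * (v i * u i) :=
        fun i _ => mul_nonneg (sub_nonneg.2 (hjen i)) (mul_nonneg (hv i).le (hu i).le)
      have := (Finset.sum_eq_zero_iff_of_nonneg hnn).mp hsz i (mem_univ i)
      have hvu : 0 < v i * u i := mul_pos (hv i) (hu i)
      have : (∑ j, P i j * φ (w j)) - φ (∑ j, P i j * w j) = 0 := by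
        rcases mul_eq_zero.mp this with h | h
        · exact h
        · exact absurd h hvu.ne'
      linarith
    have hcenter : ∀ i j, P i j ≠ 0 → w j = ∑ k, P i k * w k := by
      intro i j hPij
      have hiff := hφ.map_sum_eq_iff' (t := univ) (w := P i) (p := w)
        (fun j _ => hPnn i j) (hP1 i) (fun j _ => hw0 j)
      simp only [smul_eq_mul] at hiff
      exact hiff.mp (hterm0 i).symm j (mem_univ j) hPij
    have hwconst : ∀ k : Fin (N-1), w k = w ⟨0, by omega⟩ := by
      have key2 : ∀ t : ℕ, ∀ ht : t < N - 1, w ⟨t, ht⟩ = w ⟨0, by omega⟩ := by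
        intro t
        induction t with
        | zero => intro ht; rfl
        | succ r ih =>
          intro ht
          have hr : r < N - 1 := by omega
          have e1 := hcenter ⟨r+1, ht⟩ ⟨r+1, ht⟩ (hPdiag _)
          have e2 := hcenter ⟨r+1, ht⟩ ⟨r, hr⟩ (hPsub _ _ (by simp))
          rw [e1, ← e2]
          exact ih hr
      intro k
      have := key2 k.1 k.2
      simpa using this
    have hcS : S = w ⟨0, by omega⟩ * S := by
      calc S = ∑ j, u j * (w j * (v j * S)) := by
            rw [hSdef]
            exact Finset.sum_congr rfl fun j _ => by rw [← hpw j]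
        _ = ∑ j, w ⟨0, by omega⟩ * S * (u j * v j) := by
            refine Finset.sum_congr rfl fun j _ => ?_
            rw [hwconst j]; ring
        _ = w ⟨0, by omega⟩ * S * ∑ j, u j * v j := by rw [← Finset.mul_sum]
        _ = w ⟨0, by omega⟩ * S := by rw [huv, mul_one]
    have hc1 : w ⟨0, by omega⟩ = 1 := by
      have h := hcS
      have : (w ⟨0, by omega⟩ - 1) * S = 0 := by linarith
      rcases mul_eq_zero.mp this with h' | h'
      · linarith
      · exact absurd h' hS.ne'
    have hpcore : ∀ j, p (embIn N j) = v j * S := by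
      intro j
      rw [hpw j, hwconst j, hc1, one_mul]
    have hsplit := moran_sum_split hN p
    rw [hpsum] at hsplit
    have hsumS : ∑ k, p (embIn N k) = S := by
      rw [Finset.sum_congr rfl fun k _ => hpcore k, ← Finset.sum_mul, hvsum, one_mul]
    refine ⟨p ⟨0, by omega⟩, p (Fin.last N), S, hp _, hp _, hS.le, by
      rw [hsumS] at hsplit; linarith, ?_⟩
    funext i
    simp only [Pi.add_apply, Pi.smul_apply, smul_eq_mul]
    by_cases h0 : (i:ℕ) = 0
    · have hi : i = ⟨0, by omega⟩ := Fin.ext h0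
      rw [hi, hvx0, Pi.single_apply, Pi.single_apply, if_pos rfl,
        if_neg (Fin.ne_of_val_ne (show (0:ℕ) ≠ N by omega))]
      ring
    · by_cases hLa : (i:ℕ) = N
      · have hi : i = Fin.last N := Fin.ext (by simpa using hLa)
        rw [hi, hvxN, Pi.single_apply, Pi.single_apply,
          if_neg (Fin.ne_of_val_ne (show (N:ℕ) ≠ 0 by omega)), if_pos rfl]
        ring
      · have hk : (i:ℕ) - 1 < N - 1 := by have := i.isLt; omega
        have hi : i = embIn N ⟨(i:ℕ) - 1, hk⟩ := Fin.ext (by simp only [embIn]; omega)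
        have hne1 : embIn N ⟨(i:ℕ) - 1, hk⟩ ≠ ⟨0, by omega⟩ :=
          Fin.ne_of_val_ne (show (i:ℕ) - 1 + 1 ≠ 0 by omega)
        have hne2 : embIn N ⟨(i:ℕ) - 1, hk⟩ ≠ Fin.last N :=
          Fin.ne_of_val_ne (show (i:ℕ) - 1 + 1 ≠ N by omega)
        rw [hi, hpcore, hvxi, Pi.single_apply, Pi.single_apply,
          if_neg hne1, if_neg hne2]
        ring
  · -- reverse direction
    rintro ⟨α, β, lam, hα, hβ, hlam, hsum1, hpdef⟩
    have hpe : ∀ k, p (embIn N k) = lam * v k := by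
      intro k
      have hk1 : embIn N k ≠ ⟨0, by omega⟩ :=
        Fin.ne_of_val_ne (show (k:ℕ) + 1 ≠ 0 by omega)
      have hk2 : embIn N k ≠ Fin.last N :=
        Fin.ne_of_val_ne (show (k:ℕ) + 1 ≠ N by have := k.isLt; omega)
      rw [hpdef]
      simp only [Pi.add_apply, Pi.smul_apply, smul_eq_mul, hvxi,
        Pi.single_apply, if_neg hk1, if_neg hk2]
      ring
    have hSl : S = lam := by
      rw [hSdef, Finset.sum_congr rfl fun j _ => by rw [hpe j]]
      calc ∑ j, u j * (lam * v j) = lam * ∑ j, u j * v j := by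
            rw [Finset.mul_sum]
            exact Finset.sum_congr rfl fun j _ => by ring
        _ = lam := by rw [huv, mul_one]
    have hlam0 : 0 < lam := hSl ▸ hS
    have hEp0 : E p = 0 := by
      rw [hE p, ← hSdef, hSl]
      refine Finset.sum_eq_zero fun i _ => ?_
      have h1 : lam * v i / (v i * lam) = 1 := by
        rw [mul_comm lam (v i)]
        exact div_self (mul_pos (hv i) hlam0).ne'
      rw [hpe i, h1, hφ1, zero_mul, zero_mul]
    have hEq0 : E q = 0 := by
      rw [hE q, huq, hSl]
      refine Finset.sum_eq_zero fun i _ => ?_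
      have hqe : q (embIn N i) = lam * (μ1 * v i) := by
        rw [hqcore i, Finset.sum_congr rfl fun j _ => by rw [hpe j]]
        calc ∑ j, A i j * (lam * v j) = lam * ∑ j, A i j * v j := by
              rw [Finset.mul_sum]
              exact Finset.sum_congr rfl fun j _ => by ring
          _ = lam * (μ1 * v i) := by rw [hrowA i]
      have h1 : lam * (μ1 * v i) / (v i * (μ1 * lam)) = 1 := by
        rw [div_eq_one_iff_eq (mul_pos (hv i) (mul_pos hμ hlam0)).ne']
        ring
      rw [hqe, h1, hφ1, zero_mul, zero_mul]
    rw [hEp0, hEq0]
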